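/- Let n ≥ 1 and let K be a field of characteristic zero. In the cochain complex (C^•, d) of ordered partitions of {1,…,n}, for every permutation σ ∈ S_n the class of the singleton ordered partition ({σ(1)}, {σ(2)}, …, {σ(n)}) in C^n / im(d : C^{n−1} → C^n) equals sgn(σ) times the class of ({1}, {2}, …, {n}). -/

import Mathlib

/-!
The cochain complex of ordered partitions of `{1,…,n}` (the multidegree-`(1,…,1)` part of
the cobar construction of the polynomial coalgebra `K[t₁,…,tₙ]`).

An ordered partition of `{1,…,n}` (modeled on `Fin n`) into `k` blocks is a tuple
`(B₁,…,B_k)` of pairwise disjoint nonempty subsets covering `{1,…,n}`; equivalently,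
every block is nonempty and every element lies in exactly one block.
-/

/-- `B : Fin k → Finset (Fin n)` is an ordered partition: all blocks are nonempty and
every element of `{1,…,n}` lies in exactly one block (this encodes pairwise disjointness
together with the covering property). -/
def IsOrderedPartition (n k : ℕ) (B : Fin k → Finset (Fin n)) : Prop :=
  (∀ i, (B i).Nonempty) ∧ ∀ x : Fin n, ∃! i, x ∈ B i

/-- The set of ordered partitions of `{1,…,n}` into `k` blocks. -/
def OrderedPartition (n k : ℕ) : Type :=
  {B : Fin k → Finset (Fin n) // IsOrderedPartition n k B}

/-- `C^k`, the free `K`-vector space on the set of ordered partitions of `{1,…,n}`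
into `k` blocks. -/
abbrev OPC (K : Type*) [Field K] (n k : ℕ) : Type _ :=
  OrderedPartition n k →₀ K

/-- Replace the `i`-th block of the tuple `B` by the two consecutive blocks `A`, `A'`
(at positions `i` and `i+1`), shifting the later blocks by one. -/
def splitBlocks {n k : ℕ} (B : Fin k → Finset (Fin n)) (i : Fin k)
    (A A' : Finset (Fin n)) : Fin (k + 1) → Finset (Fin n) :=
  Function.update (i.succ.insertNth A' B) i.castSucc A

open Classical in
/-- The differential `d : C^k → C^{k+1}`.  On a basis ordered partition `(B₁,…,B_k)` it is
`d(B₁,…,B_k) = Σ_{i} (−1)^{i} Σ_{(A,A')} (B₁,…,B_{i−1}, A, A', B_{i+1},…,B_k)`, the inner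
sum running over all ordered pairs `(A, A')` of disjoint nonempty subsets with
`A ∪ A' = B_i` (such a pair is the same as a subset `A ⊆ B_i` with `A' = B_i \ A`;
the resulting tuple is an ordered partition exactly when both `A` and `A'` are nonempty,
which is what the `dite` below selects).  Here `i` runs over `Fin k` (zero-based), so the
sign `(−1)^i` matches the one-based sign `(−1)^{i−1}` of the informal statement. -/
noncomputable def dOP (K : Type*) [Field K] (n k : ℕ) :
    OPC K n k →ₗ[K] OPC K n (k + 1) :=
  Finsupp.lsum K fun B => LinearMap.toSpanSingleton K _ <|
    ∑ i : Fin k, ∑ A ∈ (B.1 i).powerset,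
      if h : IsOrderedPartition n (k + 1) (splitBlocks B.1 i A (B.1 i \ A)) then
        ((-1 : K) ^ (i : ℕ)) • Finsupp.single (⟨_, h⟩ : OrderedPartition n (k + 1)) (1 : K)
      else 0

/-- The ordered partition `({σ(1)}, {σ(2)}, …, {σ(n)})` of `{1,…,n}` into singletons. -/
def singletonOP (n : ℕ) (σ : Equiv.Perm (Fin n)) : OrderedPartition n n :=
  ⟨fun j => {σ j}, fun i => Finset.singleton_nonempty _, fun x =>
    ⟨σ.symm x, by simp, fun i hi => by
      simp only [Finset.mem_singleton] at hi
      rw [hi]; simp⟩⟩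


namespace Statement3Aux

open Equiv Finset

variable {n k m : ℕ}

/-- The merged ordered partition: singletons `{σ i}` except the block at position `j`
is the doubleton `{σ j.castSucc, σ j.succ}`. -/
def merged (m : ℕ) (σ : Equiv.Perm (Fin (m + 1))) (j : Fin m) :
    Fin m → Finset (Fin (m + 1)) := fun i =>
  if i = j then {σ j.castSucc, σ j.succ} else {σ (j.succ.succAbove i)}

lemma merged_isOP (σ : Equiv.Perm (Fin (m + 1))) (j : Fin m) :
    IsOrderedPartition (m + 1) m (merged m σ j) := by
  constructor
  · intro i
    unfold merged
    split
    · exact Finset.insert_nonempty _ _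
    · exact Finset.singleton_nonempty _
  · intro x
    have hmem : ∀ i, x ∈ merged m σ j i ↔
        (if i = j then σ.symm x = j.castSucc ∨ σ.symm x = j.succ
          else σ.symm x = j.succ.succAbove i) := by
      intro i
      unfold merged
      split <;> simp [Equiv.symm_apply_eq]
    by_cases h1 : σ.symm x = j.castSucc ∨ σ.symm x = j.succ
    · refine ⟨j, ?_, ?_⟩
      · exact (hmem j).2 (by simpa using h1)
      · intro i hi
        rw [hmem] at hi
        rcases eq_or_ne i j with rfl | hij
        · rfl
        · rw [if_neg hij] at hi
          rcases h1 with h1 | h1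
          · rw [h1] at hi
            have : j.succ.succAbove i = j.succ.succAbove j := by
              rw [Fin.succAbove_succ_self, ← hi]
            exact absurd (Fin.succAbove_right_injective this) hij
          · rw [h1] at hi
            exact absurd hi.symm (Fin.succAbove_ne _ _)
    · push_neg at h1
      obtain ⟨h1c, h1s⟩ := h1
      obtain ⟨i, hi⟩ := Fin.exists_succAbove_eq h1s
      have hij : i ≠ j := by
        rintro rfl
        rw [Fin.succAbove_succ_self] at hi
        exact h1c hi.symm
      refine ⟨i, ?_, ?_⟩
      · exact (hmem i).2 (by rw [if_neg hij]; exact hi.symm)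
      · intro i' hi'
        rw [hmem] at hi'
        rcases eq_or_ne i' j with rfl | hij'
        · rw [if_pos rfl] at hi'
          rcases hi' with h | h
          · exact absurd h h1c
          · exact absurd h h1s
        · rw [if_neg hij'] at hi'
          exact Fin.succAbove_right_injective (hi'.symm.trans hi.symm)

lemma split_eq (σ : Equiv.Perm (Fin (m + 1))) (j : Fin m) :
    splitBlocks (merged m σ j) j {σ j.castSucc} {σ j.succ} = (singletonOP (m + 1) σ).1 := by
  funext k
  unfold splitBlocks
  rcases eq_or_ne k j.castSucc with rfl | hk1
  · rw [Function.update_self]; rfl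
  · rw [Function.update_of_ne hk1]
    rcases eq_or_ne k j.succ with rfl | hk2
    · rw [Fin.insertNth_apply_same]; rfl
    · obtain ⟨i, hi⟩ := Fin.exists_succAbove_eq hk2
      have hij : i ≠ j := by
        rintro rfl
        rw [Fin.succAbove_succ_self] at hi
        exact hk1 hi.symm
      rw [← hi, Fin.insertNth_apply_succAbove]
      show merged m σ j i = _
      unfold merged
      rw [if_neg hij]
      rfl

lemma split_eq' (σ : Equiv.Perm (Fin (m + 1))) (j : Fin m) :
    splitBlocks (merged m σ j) j {σ j.succ} {σ j.castSucc} =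
      (singletonOP (m + 1) (σ * Equiv.swap j.castSucc j.succ)).1 := by
  funext k
  unfold splitBlocks
  rcases eq_or_ne k j.castSucc with rfl | hk1
  · rw [Function.update_self]
    show _ = {(σ * Equiv.swap j.castSucc j.succ) j.castSucc}
    rw [Equiv.Perm.mul_apply, Equiv.swap_apply_left]
  · rw [Function.update_of_ne hk1]
    rcases eq_or_ne k j.succ with rfl | hk2
    · rw [Fin.insertNth_apply_same]
      show _ = {(σ * Equiv.swap j.castSucc j.succ) j.succ}
      rw [Equiv.Perm.mul_apply, Equiv.swap_apply_right]
    · obtain ⟨i, hi⟩ := Fin.exists_succAbove_eq hk2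
      have hij : i ≠ j := by
        rintro rfl
        rw [Fin.succAbove_succ_self] at hi
        exact hk1 hi.symm
      rw [← hi, Fin.insertNth_apply_succAbove]
      show merged m σ j i = {(σ * Equiv.swap j.castSucc j.succ) (j.succ.succAbove i)}
      unfold merged
      rw [if_neg hij, Equiv.Perm.mul_apply,
        Equiv.swap_apply_of_ne_of_ne (hi.symm ▸ hk1) (Fin.succAbove_ne _ _)]

lemma not_isOP_left (B : Fin k → Finset (Fin n)) (i : Fin k) (A' : Finset (Fin n)) :
    ¬ IsOrderedPartition n (k + 1) (splitBlocks B i ∅ A') := fun h => by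
  have := h.1 i.castSucc
  rw [splitBlocks, Function.update_self] at this
  exact Finset.not_nonempty_empty this

lemma not_isOP_right (B : Fin k → Finset (Fin n)) (i : Fin k) (A : Finset (Fin n)) :
    ¬ IsOrderedPartition n (k + 1) (splitBlocks B i A ∅) := fun h => by
  have := h.1 i.succ
  rw [splitBlocks, Function.update_of_ne (Fin.castSucc_lt_succ (i := i)).ne',
    Fin.insertNth_apply_same] at this
  exact Finset.not_nonempty_empty this

lemma powerset_singleton (a : Fin n) :
    ({a} : Finset (Fin n)).powerset = {∅, {a}} := by
  ext t
  simp [Finset.subset_singleton_iff]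

lemma key (K : Type*) [Field K] (m : ℕ) (σ : Equiv.Perm (Fin (m + 1))) (j : Fin m) :
    Finsupp.single (singletonOP (m + 1) σ) (1 : K) +
      Finsupp.single (singletonOP (m + 1) (σ * Equiv.swap j.castSucc j.succ)) (1 : K) ∈
      LinearMap.range (dOP K (m + 1) m) := by
  classical
  set x := σ j.castSucc with hx
  set y := σ j.succ with hy
  have hxy : x ≠ y := σ.injective.ne (Fin.castSucc_lt_succ (i := j)).ne
  set P : OrderedPartition (m + 1) m := ⟨merged m σ j, merged_isOP σ j⟩ with hP
  refine ⟨((-1 : K) ^ (j : ℕ)) • Finsupp.single P 1, ?_⟩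
  rw [map_smul, dOP, Finsupp.lsum_single, LinearMap.toSpanSingleton_apply, one_smul]
  have hP1 : ∀ i, P.1 i = merged m σ j i := fun _ => rfl
  rw [Fintype.sum_eq_single j ?_]
  swap
  · intro i hij
    rw [hP1 i]
    unfold merged
    rw [if_neg hij]
    rw [powerset_singleton, Finset.sum_pair (Ne.symm (Finset.singleton_ne_empty _))]
    erw [dif_neg (not_isOP_left P.1 i _)]
    rw [show ({σ (j.succ.succAbove i)} : Finset (Fin (m+1))) \ {σ (j.succ.succAbove i)} = ∅ from
      Finset.sdiff_self _]
    erw [dif_neg (not_isOP_right P.1 i _)]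
    simp
  rw [hP1 j]
  have hmj : merged m σ j j = {x, y} := by unfold merged; rw [if_pos rfl]
  rw [hmj]
  have hxny : x ∉ ({y} : Finset (Fin (m + 1))) := by simpa using hxy
  rw [show ({x, y} : Finset (Fin (m + 1))) = insert x {y} from rfl,
    Finset.sum_powerset_insert hxny, powerset_singleton,
    Finset.sum_pair (Ne.symm (Finset.singleton_ne_empty _)),
    Finset.sum_pair (Ne.symm (Finset.singleton_ne_empty _))]
  have hd2 : (insert x {y} : Finset (Fin (m + 1))) \ {y} = {x} := by
    ext a
    simp only [Finset.mem_sdiff, Finset.mem_insert, Finset.mem_singleton]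
    constructor
    · rintro ⟨h | h, h2⟩
      · exact h
      · exact absurd h h2
    · rintro rfl; exact ⟨Or.inl rfl, fun h => hxy h⟩
  have hd3 : insert x ∅ = ({x} : Finset (Fin (m + 1))) := by simp
  have hd4 : (insert x {y} : Finset (Fin (m + 1))) \ {x} = {y} := by
    ext a
    simp only [Finset.mem_sdiff, Finset.mem_insert, Finset.mem_singleton]
    constructor
    · rintro ⟨h | h, h2⟩
      · exact absurd h h2
      · exact h
    · rintro rfl; exact ⟨Or.inr rfl, fun h => hxy h.symm⟩
  have hd5 : (insert x {y} : Finset (Fin (m + 1))) \ insert x {y} = ∅ := Finset.sdiff_self _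
  erw [dif_neg (not_isOP_left P.1 j _), hd2, hd3, hd4, hd5,
    dif_neg (not_isOP_right P.1 j _)]
  have hop1 : IsOrderedPartition (m + 1) (m + 1) (splitBlocks (merged m σ j) j {x} {y}) := by
    rw [hx, hy, split_eq]; exact (singletonOP (m + 1) σ).2
  have hop2 : IsOrderedPartition (m + 1) (m + 1) (splitBlocks (merged m σ j) j {y} {x}) := by
    rw [hx, hy, split_eq']; exact (singletonOP (m + 1) (σ * Equiv.swap j.castSucc j.succ)).2
  erw [dif_pos hop2, dif_pos hop1]
  erw [show (⟨_, hop1⟩ : OrderedPartition (m + 1) (m + 1)) = singletonOP (m + 1) σ from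
    Subtype.ext (split_eq σ j)]
  erw [show (⟨_, hop2⟩ : OrderedPartition (m + 1) (m + 1)) =
      singletonOP (m + 1) (σ * Equiv.swap j.castSucc j.succ) from
    Subtype.ext (split_eq' σ j)]
  have hsq : ((-1 : K) ^ (j : ℕ)) * ((-1 : K) ^ (j : ℕ)) = 1 := by
    rw [← pow_add]; exact Even.neg_one_pow ⟨(j : ℕ), rfl⟩
  simp only [smul_add, smul_zero, smul_smul, hsq, one_smul, zero_add, add_zero]
  show ((-1 : K) ^ (j : ℕ)) • ((0 : OPC K (m + 1) (m + 1)) + ((-1 : K) ^ (j : ℕ)) •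
      Finsupp.single (singletonOP (m + 1) (σ * Equiv.swap j.castSucc j.succ)) (1 : K)) +
      ((-1 : K) ^ (j : ℕ)) • (((-1 : K) ^ (j : ℕ)) • Finsupp.single (singletonOP (m + 1) σ) (1 : K) + 0) =
    Finsupp.single (singletonOP (m + 1) σ) (1 : K) +
      Finsupp.single (singletonOP (m + 1) (σ * Equiv.swap j.castSucc j.succ)) (1 : K)
  simp only [smul_add, smul_zero, smul_smul, hsq, one_smul, zero_add, add_zero]
  exact add_comm _ _

end Statement3Aux

/-- for every permutation `σ ∈ S_n`, the class of the singleton ordered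
partition `({σ(1)}, …, {σ(n)})` in `C^n / im(d : C^{n−1} → C^n)` equals `sgn(σ)` times
the class of `({1}, {2}, …, {n})`.  (Here `n ≥ 1` is written as `m + 1`.) -/

theorem statement3 (K : Type*) [Field K] [CharZero K] (m : ℕ)
    (σ : Equiv.Perm (Fin (m + 1))) :
    (Submodule.Quotient.mk (Finsupp.single (singletonOP (m + 1) σ) (1 : K)) :
        OPC K (m + 1) (m + 1) ⧸ LinearMap.range (dOP K (m + 1) m)) =
      ((Equiv.Perm.sign σ : ℤ) : K) •
        Submodule.Quotient.mk (Finsupp.single (singletonOP (m + 1) 1) (1 : K)) := by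
  classical
  have hQ : ∀ τ : Equiv.Perm (Fin (m + 1)), ∀ ρ : Equiv.Perm (Fin (m + 1)),
      (Submodule.Quotient.mk (Finsupp.single (singletonOP (m + 1) (ρ * τ)) (1 : K)) :
          OPC K (m + 1) (m + 1) ⧸ LinearMap.range (dOP K (m + 1) m)) =
        ((Equiv.Perm.sign τ : ℤ) : K) •
          Submodule.Quotient.mk (Finsupp.single (singletonOP (m + 1) ρ) (1 : K)) := by
    intro τ
    have hτ : τ ∈ Submonoid.closure
        (Set.range fun i : Fin m => Equiv.swap i.castSucc i.succ) := by
      rw [Equiv.Perm.mclosure_swap_castSucc_succ]; trivial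
    induction hτ using Submonoid.closure_induction with
    | mem g hg =>
      obtain ⟨j, rfl⟩ := hg
      intro ρ
      have hne : j.castSucc ≠ j.succ := (Fin.castSucc_lt_succ (i := j)).ne
      have hr := Statement3Aux.key K m ρ j
      have h0 : (Submodule.Quotient.mk
          (Finsupp.single (singletonOP (m + 1) ρ) (1 : K) +
            Finsupp.single (singletonOP (m + 1) (ρ * Equiv.swap j.castSucc j.succ)) (1 : K)) :
          OPC K (m + 1) (m + 1) ⧸ LinearMap.range (dOP K (m + 1) m)) = 0 :=
        (Submodule.Quotient.mk_eq_zero _).2 hr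
      rw [Submodule.Quotient.mk_add] at h0
      rw [eq_neg_of_add_eq_zero_right h0, Equiv.Perm.sign_swap hne]
      push_cast
      rw [neg_one_smul]
    | one =>
      intro ρ
      rw [mul_one, Equiv.Perm.sign_one]
      push_cast
      rw [one_smul]
    | mul a b ha hb hQa hQb =>
      intro ρ
      rw [← mul_assoc, hQb (ρ * a), hQa ρ, Equiv.Perm.sign_mul, smul_smul]
      push_cast
      ring_nf
  have := hQ σ 1
  rw [one_mul] at this
  exact this
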